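/- Let μ > 0 and L² < μ, and define V(r) = (L²/r² + 1)(1 − μ/r²) for r > 0. Then V is strictly monotone increasing on (0,∞), i.e. V'(r) > 0 for all r > 0; in particular V has no critical points. -/

import Mathlib

open Real Set

noncomputable def Vpot4' (μ L : ℝ) (r : ℝ) : ℝ := (L ^ 2 / r ^ 2 + 1) * (1 - μ / r ^ 2)

lemma Vpot4'_hasDerivAt (μ L r : ℝ) (hr : r ≠ 0) :
    HasDerivAt (Vpot4' μ L) (2 * (μ - L ^ 2) / r ^ 3 + 4 * L ^ 2 * μ / r ^ 5) r := by
  have h2 : (r : ℝ) ^ 2 ≠ 0 := pow_ne_zero 2 hr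
  have h1 : HasDerivAt (fun r : ℝ => L ^ 2 / r ^ 2 + 1)
      ((0 * r ^ 2 - L ^ 2 * (2 * r ^ 1)) / (r ^ 2) ^ 2) r :=
    (((hasDerivAt_const r (L ^ 2)).div (hasDerivAt_pow 2 r) h2)).add_const 1
  have h3 : HasDerivAt (fun r : ℝ => 1 - μ / r ^ 2)
      (-((0 * r ^ 2 - μ * (2 * r ^ 1)) / (r ^ 2) ^ 2)) r :=
    (((hasDerivAt_const r μ).div (hasDerivAt_pow 2 r) h2)).const_sub 1
  have := h1.mul h3
  refine this.congr_deriv ?_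
  field_simp
  ring

theorem tangherlini_d4_monotone_of_small_L (μ L : ℝ) (hμ : 0 < μ) (hL : L ^ 2 < μ) :
    StrictMonoOn (Vpot4' μ L) (Set.Ioi 0) ∧
    ∀ r : ℝ, 0 < r → 0 < deriv (Vpot4' μ L) r := by
  have hpos : ∀ r : ℝ, 0 < r → 0 < deriv (Vpot4' μ L) r := by
    intro r hr
    rw [(Vpot4'_hasDerivAt μ L r hr.ne').deriv]
    have hd : 0 < μ - L ^ 2 := sub_pos.mpr hL
    have h1 : 0 < 2 * (μ - L ^ 2) / r ^ 3 := by positivity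
    have h2 : 0 ≤ 4 * L ^ 2 * μ / r ^ 5 := by positivity
    linarith
  refine ⟨?_, hpos⟩
  have hcont : ContinuousOn (Vpot4' μ L) (Set.Ioi 0) := by
    intro r hr
    exact ((Vpot4'_hasDerivAt μ L r (ne_of_gt hr)).continuousAt).continuousWithinAt
  have := strictMonoOn_of_deriv_pos (convex_Ioi 0) hcont ?_
  · exact this
  · intro r hr
    rw [interior_Ioi] at hr
    exact hpos r hr
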